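/- arXiv:2310.14344 — 2 statements merged into one kernel-verified Lean document; each statement's English description precedes it below -/
import Mathlib

section
/- Let X be a random vector in ℝⁿ taking values in a countable set of pairwise distinct points (x_i)_{i ∈ I} with P(X = x_i) = P_i > 0 and Σ_i P_i = 1, let V ~ N(0, I) be independent of X, let σ > 0, and let Y = X + σV. With m_γ(t) = 1 − exp(−t²/γ²), suppose f* : ℝⁿ → ℝⁿ is measurable and minimizes f ↦ lim_{γ→0⁺} 𝔼[m_γ(‖f(Y) − X‖)] over all measurable f : ℝⁿ → ℝⁿ. Then for Lebesgue-almost every y ∈ ℝⁿ, f*(y) ∈ {x_i : i ∈ I} and φ_{σ²}(y − f*(y)) · P(X = f*(y)) = sup_{i ∈ I} φ_{σ²}(y − x_i) P_i; that is, f*(y) is the maximum a posteriori estimate of X given Y = y almost surely. -/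
open Filter Topology MeasureTheory ProbabilityTheory
open scoped ENNReal

noncomputable def gaussDensity (n : ℕ) (s : ℝ) (u : EuclideanSpace ℝ (Fin n)) : ℝ :=
  (2 * Real.pi * s) ^ (-(n : ℝ) / 2) * Real.exp (-‖u‖ ^ 2 / (2 * s))

private lemma gauss_pos {n : ℕ} {s : ℝ} (hs : 0 < s) (u : EuclideanSpace ℝ (Fin n)) :
    0 < gaussDensity n s u := by
  unfold gaussDensity
  have : 0 < 2 * Real.pi * s := by positivity
  positivity

-- key pointwise density identity
private lemma gauss_scale {n : ℕ} {σ : ℝ} (hσ : 0 < σ) (u : EuclideanSpace ℝ (Fin n)) :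
    σ ^ n * gaussDensity n (σ ^ 2) (σ • u) = gaussDensity n 1 u := by
  unfold gaussDensity
  have hσ2 : (0:ℝ) < σ ^ 2 := by positivity
  have hnorm : ‖σ • u‖ = σ * ‖u‖ := by
    rw [norm_smul, Real.norm_eq_abs, abs_of_pos hσ]
  have hexp : -‖σ • u‖ ^ 2 / (2 * σ ^ 2) = -‖u‖ ^ 2 / (2 * 1) := by
    rw [hnorm]; field_simp
  rw [hexp]
  have hcoef : σ ^ n * (2 * Real.pi * σ ^ 2) ^ (-(n : ℝ) / 2)
      = (2 * Real.pi * 1) ^ (-(n : ℝ) / 2) := by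
    have hpi : (0:ℝ) < 2 * Real.pi := by positivity
    rw [Real.mul_rpow (le_of_lt hpi) (le_of_lt hσ2)]
    have : (σ ^ 2 : ℝ) ^ (-(n : ℝ) / 2) = σ ^ (-(n:ℝ)) := by
      rw [← Real.rpow_natCast σ 2, ← Real.rpow_mul (le_of_lt hσ)]
      congr 1
      push_cast
      ring
    rw [this, mul_one]
    have : σ ^ n * ((2 * Real.pi) ^ (-(n : ℝ) / 2) * σ ^ (-(n:ℝ)))
        = (2 * Real.pi) ^ (-(n : ℝ) / 2) * (σ ^ (n:ℝ) * σ ^ (-(n:ℝ))) := by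
      rw [Real.rpow_natCast]; ring
    rw [this, ← Real.rpow_add hσ, add_neg_cancel, Real.rpow_zero, mul_one]
  rw [← hcoef]; ring

private lemma gauss_cont {n : ℕ} (s : ℝ) (c : EuclideanSpace ℝ (Fin n)) :
    Measurable (fun y : EuclideanSpace ℝ (Fin n) =>
      ENNReal.ofReal (gaussDensity n s (y - c))) := by
  apply Measurable.ennreal_ofReal
  unfold gaussDensity
  fun_prop

private lemma gauss_map {n : ℕ} {σ : ℝ} (hσ : 0 < σ) (c : EuclideanSpace ℝ (Fin n)) :
    Measure.map (fun v : EuclideanSpace ℝ (Fin n) => c + σ • v)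
      ((volume : Measure (EuclideanSpace ℝ (Fin n))).withDensity
        (fun u => ENNReal.ofReal (gaussDensity n 1 u)))
      = (volume : Measure (EuclideanSpace ℝ (Fin n))).withDensity
        (fun y => ENNReal.ofReal (gaussDensity n (σ ^ 2) (y - c))) := by
  have hT : Measurable (fun v : EuclideanSpace ℝ (Fin n) => c + σ • v) :=
    (measurable_id.const_smul σ).const_add c
  have hσn : (0:ℝ) < σ ^ n := by positivity
  have hmap_vol : Measure.map (fun v : EuclideanSpace ℝ (Fin n) => c + σ • v)
      (volume : Measure (EuclideanSpace ℝ (Fin n)))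
      = ENNReal.ofReal ((σ ^ n)⁻¹) • (volume : Measure (EuclideanSpace ℝ (Fin n))) := by
    have h1 : Measure.map (fun v : EuclideanSpace ℝ (Fin n) => σ • v)
        (volume : Measure (EuclideanSpace ℝ (Fin n)))
        = ENNReal.ofReal (|(σ ^ Module.finrank ℝ (EuclideanSpace ℝ (Fin n)))⁻¹|) •
          (volume : Measure (EuclideanSpace ℝ (Fin n))) :=
      MeasureTheory.Measure.map_addHaar_smul volume hσ.ne'
    have hfr : Module.finrank ℝ (EuclideanSpace ℝ (Fin n)) = n := finrank_euclideanSpace_fin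
    have h2 : Measure.map (fun v : EuclideanSpace ℝ (Fin n) => c + σ • v)
        (volume : Measure (EuclideanSpace ℝ (Fin n)))
        = Measure.map (fun y : EuclideanSpace ℝ (Fin n) => c + y)
          (Measure.map (fun v : EuclideanSpace ℝ (Fin n) => σ • v) volume) :=
      (Measure.map_map (measurable_const_add c) (measurable_id.const_smul σ)).symm
    rw [h2, h1, Measure.map_smul, MeasureTheory.map_add_left_eq_self _ c, hfr,
      abs_of_pos (by positivity)]
  have hvol : (volume : Measure (EuclideanSpace ℝ (Fin n)))
      = ENNReal.ofReal (σ ^ n) •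
        Measure.map (fun v : EuclideanSpace ℝ (Fin n) => c + σ • v) volume := by
    rw [hmap_vol, smul_smul, ← ENNReal.ofReal_mul (le_of_lt hσn),
      mul_inv_cancel₀ hσn.ne', ENNReal.ofReal_one, one_smul]
  ext s hs
  rw [Measure.map_apply hT hs, withDensity_apply _ (hT hs), withDensity_apply _ hs,
    ← lintegral_indicator hs, ← lintegral_indicator (hT hs)]
  have hFmeas : Measurable (s.indicator
      (fun y : EuclideanSpace ℝ (Fin n) => ENNReal.ofReal (gaussDensity n (σ ^ 2) (y - c)))) :=
    (gauss_cont _ c).indicator hs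
  conv_rhs => rw [hvol]
  rw [lintegral_smul_measure, lintegral_map hFmeas hT]
  have hm2 : Measurable fun a : EuclideanSpace ℝ (Fin n) =>
      s.indicator (fun y => ENNReal.ofReal (gaussDensity n (σ ^ 2) (y - c))) (c + σ • a) :=
    hFmeas.comp hT
  rw [smul_eq_mul, ← lintegral_const_mul _ hm2]
  congr 1
  funext u
  by_cases hu : u ∈ (fun v : EuclideanSpace ℝ (Fin n) => c + σ • v) ⁻¹' s
  · rw [Set.indicator_of_mem hu, Set.indicator_of_mem (show c + σ • u ∈ s from hu),
      ← ENNReal.ofReal_mul (le_of_lt hσn)]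
    congr 1
    have h3 : c + σ • u - c = σ • u := by abel
    rw [h3]
    exact (gauss_scale hσ u).symm
  · rw [Set.indicator_of_notMem hu, Set.indicator_of_notMem (show c + σ • u ∉ s from hu),
      mul_zero]

private lemma tendsto_m {c : ℝ} (hc : 0 ≤ c) :
    Tendsto (fun γ : ℝ => 1 - Real.exp (-c / γ ^ 2)) (𝓝[>] (0:ℝ))
      (𝓝 (if c = 0 then 0 else 1)) := by
  rcases eq_or_lt_of_le hc with h0 | hpos
  · rw [if_pos h0.symm, ← h0]
    simp only [neg_zero, zero_div, Real.exp_zero, sub_self]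
    exact tendsto_const_nhds
  · rw [if_neg hpos.ne']
    have h1 : Tendsto (fun γ : ℝ => γ ^ 2) (𝓝[>] (0:ℝ)) (𝓝[>] (0:ℝ)) := by
      apply tendsto_nhdsWithin_of_tendsto_nhds_of_eventually_within
      · have := ((continuous_pow 2).tendsto (0:ℝ)).mono_left
          (nhdsWithin_le_nhds (s := Set.Ioi (0:ℝ)))
        simpa using this
      · filter_upwards [self_mem_nhdsWithin] with γ (hγ : 0 < γ)
        exact pow_pos hγ 2
    have h2 : Tendsto (fun γ : ℝ => (γ ^ 2)⁻¹) (𝓝[>] (0:ℝ)) atTop :=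
      tendsto_inv_nhdsGT_zero.comp h1
    have h3 : Tendsto (fun γ : ℝ => c * (γ ^ 2)⁻¹) (𝓝[>] (0:ℝ)) atTop :=
      h2.const_mul_atTop hpos
    have h5 : Tendsto (fun γ : ℝ => Real.exp (-(c * (γ ^ 2)⁻¹))) (𝓝[>] (0:ℝ)) (𝓝 0) :=
      Real.tendsto_exp_neg_atTop_nhds_zero.comp h3
    have h6 : Tendsto (fun γ : ℝ => 1 - Real.exp (-(c * (γ ^ 2)⁻¹))) (𝓝[>] (0:ℝ)) (𝓝 1) := by
      simpa using tendsto_const_nhds.sub h5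
    refine h6.congr fun γ => ?_
    rw [div_eq_mul_inv, neg_mul]

private noncomputable def aFun (n : ℕ) (σ : ℝ) {I : Type*} (x : I → EuclideanSpace ℝ (Fin n))
    (P : I → ℝ) (i : I) (y : EuclideanSpace ℝ (Fin n)) : ℝ≥0∞ :=
  ENNReal.ofReal (gaussDensity n (σ ^ 2) (y - x i) * P i)

private noncomputable def Qfun (n : ℕ) (σ : ℝ) {I : Type*} [Countable I]
    (x : I → EuclideanSpace ℝ (Fin n)) (P : I → ℝ)
    (f : EuclideanSpace ℝ (Fin n) → EuclideanSpace ℝ (Fin n))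
    (y : EuclideanSpace ℝ (Fin n)) : ℝ≥0∞ :=
  ∑' i, Set.indicator (f ⁻¹' {x i}) (aFun n σ x P i) y

private noncomputable def Mfun (n : ℕ) (σ : ℝ) {I : Type*} (x : I → EuclideanSpace ℝ (Fin n))
    (P : I → ℝ) (y : EuclideanSpace ℝ (Fin n)) : ℝ≥0∞ :=
  ⨆ i, aFun n σ x P i y

private lemma aFun_meas (n : ℕ) (σ : ℝ) {I : Type*} (x : I → EuclideanSpace ℝ (Fin n))
    (P : I → ℝ) (i : I) : Measurable (aFun n σ x P i) := by
  apply Measurable.ennreal_ofReal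
  unfold gaussDensity
  fun_prop

private lemma Qfun_meas (n : ℕ) (σ : ℝ) {I : Type*} [Countable I]
    (x : I → EuclideanSpace ℝ (Fin n)) (P : I → ℝ)
    {f : EuclideanSpace ℝ (Fin n) → EuclideanSpace ℝ (Fin n)} (hf : Measurable f) :
    Measurable (Qfun n σ x P f) := by
  apply Measurable.ennreal_tsum
  intro i
  exact (aFun_meas n σ x P i).indicator (hf (measurableSet_singleton _))

private lemma Mfun_meas (n : ℕ) (σ : ℝ) {I : Type*} [Countable I]
    (x : I → EuclideanSpace ℝ (Fin n)) (P : I → ℝ) :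
    Measurable (Mfun n σ x P) :=
  Measurable.iSup fun i => aFun_meas n σ x P i

private lemma Qfun_le_Mfun (n : ℕ) (σ : ℝ) {I : Type*} [Countable I]
    {x : I → EuclideanSpace ℝ (Fin n)} (hxinj : Function.Injective x) (P : I → ℝ)
    (f : EuclideanSpace ℝ (Fin n) → EuclideanSpace ℝ (Fin n))
    (y : EuclideanSpace ℝ (Fin n)) : Qfun n σ x P f y ≤ Mfun n σ x P y := by
  by_cases h : ∃ j, f y = x j
  · obtain ⟨j, hj⟩ := h
    have hQ : Qfun n σ x P f y = Set.indicator (f ⁻¹' {x j}) (aFun n σ x P j) y := by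
      apply tsum_eq_single
      intro i hij
      apply Set.indicator_of_notMem
      intro hmem
      have : f y = x i := hmem
      exact hij (hxinj (by rw [← hj, this]))
    rw [hQ]
    exact le_trans (Set.indicator_le_self _ _ y) (le_iSup (fun i => aFun n σ x P i y) j)
  · have hQ : Qfun n σ x P f y = 0 := by
      unfold Qfun
      convert tsum_zero with i
      apply Set.indicator_of_notMem
      intro hmem
      exact h ⟨i, hmem⟩
    rw [hQ]
    exact zero_le
/-- **Learning via proximal matching, discrete case.** Let `X` take values
in a countable set of pairwise distinct points `x_i` with `P(X = x_i) = P_i > 0` summing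
to one, `V ~ N(0, I)` independent of `X`, `σ > 0`, `Y = X + σV`, and
`m_γ(t) = 1 − exp(−t²/γ²)`. If a measurable `f*` minimizes
`f ↦ lim_{γ→0⁺} 𝔼[m_γ(‖f(Y) − X‖)]` over measurable `f`, then for Lebesgue-almost every
`y`, `f*(y)` lies in `{x_i}` and `φ_{σ²}(y − f*(y)) P(X = f*(y)) = sup_i φ_{σ²}(y − x_i) P_i`,
i.e. `f*(y)` is the MAP estimate of `X` given `Y = y`. -/
theorem statement10 {n : ℕ} {Ω : Type*} [MeasureSpace Ω]
    [IsProbabilityMeasure (ℙ : Measure Ω)]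
    {I : Type*} [Countable I]
    (x : I → EuclideanSpace ℝ (Fin n)) (hxinj : Function.Injective x)
    (P : I → ℝ) (hP : ∀ i, 0 < P i) (hPsum : ∑' i, P i = 1)
    (X V Y : Ω → EuclideanSpace ℝ (Fin n)) (hX : Measurable X) (hV : Measurable V)
    (hXval : ∀ ω, ∃ i, X ω = x i)
    (hXP : ∀ i, (ℙ {ω : Ω | X ω = x i}).toReal = P i)
    (hVlaw : Measure.map V ℙ =
      (volume : Measure (EuclideanSpace ℝ (Fin n))).withDensity
        (fun u => ENNReal.ofReal (gaussDensity n 1 u)))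
    (hindep : IndepFun X V ℙ)
    (σ : ℝ) (hσ : 0 < σ) (hY : ∀ ω, Y ω = X ω + σ • V ω)
    (fstar : EuclideanSpace ℝ (Fin n) → EuclideanSpace ℝ (Fin n))
    (hfstar : Measurable fstar)
    (L : (EuclideanSpace ℝ (Fin n) → EuclideanSpace ℝ (Fin n)) → ℝ)
    (hL : ∀ f : EuclideanSpace ℝ (Fin n) → EuclideanSpace ℝ (Fin n), Measurable f →
      Tendsto (fun γ : ℝ => ∫ ω, (1 - Real.exp (-‖f (Y ω) - X ω‖ ^ 2 / γ ^ 2)) ∂ℙ)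
        (𝓝[>] (0 : ℝ)) (𝓝 (L f)))
    (hmin : ∀ f : EuclideanSpace ℝ (Fin n) → EuclideanSpace ℝ (Fin n), Measurable f →
      L fstar ≤ L f) :
    ∀ᵐ y ∂(volume : Measure (EuclideanSpace ℝ (Fin n))),
      (∃ i, fstar y = x i) ∧
      gaussDensity n (σ ^ 2) (y - fstar y) * (ℙ {ω : Ω | X ω = fstar y}).toReal
        = ⨆ i, gaussDensity n (σ ^ 2) (y - x i) * P i := by
  classical
  have hσ2 : (0:ℝ) < σ ^ 2 := by positivity
  have hIne : Nonempty I := by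
    by_contra h
    rw [not_nonempty_iff] at h
    rw [tsum_empty] at hPsum
    norm_num at hPsum
  have hPsummable : Summable P := by
    by_contra h
    rw [tsum_eq_zero_of_not_summable h] at hPsum
    norm_num at hPsum
  have hYm : Measurable Y := by
    have hYe : Y = fun ω => X ω + σ • V ω := funext hY
    rw [hYe]
    exact hX.add (hV.const_smul σ)
  have hTm : ∀ i, Measurable (fun v : EuclideanSpace ℝ (Fin n) => x i + σ • v) :=
    fun i => (measurable_id.const_smul σ).const_add (x i)
  have hlaw : ∀ i, Measure.map (fun v : EuclideanSpace ℝ (Fin n) => x i + σ • v)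
      (Measure.map V ℙ)
      = (volume : Measure (EuclideanSpace ℝ (Fin n))).withDensity
        (fun y => ENNReal.ofReal (gaussDensity n (σ ^ 2) (y - x i))) := by
    intro i
    rw [hVlaw]
    exact gauss_map hσ (x i)
  have hEqMeas : ∀ f : EuclideanSpace ℝ (Fin n) → EuclideanSpace ℝ (Fin n), Measurable f →
      MeasurableSet {ω | f (Y ω) = X ω} :=
    fun f hf => measurableSet_eq_fun (hf.comp hYm) hX
  -- Step 1: identify the probability of correct guess as an integral of Qfun
  have key : ∀ f : EuclideanSpace ℝ (Fin n) → EuclideanSpace ℝ (Fin n), Measurable f →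
      ℙ {ω | f (Y ω) = X ω} = ∫⁻ y, Qfun n σ x P f y ∂volume := by
    intro f hf
    have hA : ∀ i, MeasurableSet (f ⁻¹' {x i}) := fun i => hf (measurableSet_singleton _)
    have hB : ∀ i, MeasurableSet
        ((fun v : EuclideanSpace ℝ (Fin n) => x i + σ • v) ⁻¹' (f ⁻¹' {x i})) :=
      fun i => (hTm i) (hA i)
    have hset : {ω | f (Y ω) = X ω} = ⋃ i, (X ⁻¹' {x i} ∩
        V ⁻¹' ((fun v : EuclideanSpace ℝ (Fin n) => x i + σ • v) ⁻¹' (f ⁻¹' {x i}))) := by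
      ext ω
      simp only [Set.mem_setOf_eq, Set.mem_iUnion, Set.mem_inter_iff, Set.mem_preimage,
        Set.mem_singleton_iff]
      constructor
      · intro hω
        obtain ⟨i, hi⟩ := hXval ω
        refine ⟨i, hi, ?_⟩
        have hYω : Y ω = x i + σ • V ω := by rw [hY ω, hi]
        rw [← hYω, hω, hi]
      · rintro ⟨i, hXi, hfi⟩
        have hYω : Y ω = x i + σ • V ω := by rw [hY ω, hXi]
        rw [hYω, hfi, hXi]
    have hdisj : Pairwise (Function.onFun Disjoint fun i => X ⁻¹' {x i} ∩
        V ⁻¹' ((fun v : EuclideanSpace ℝ (Fin n) => x i + σ • v) ⁻¹' (f ⁻¹' {x i}))) := by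
      intro i j hij
      refine Set.disjoint_left.mpr ?_
      rintro ω ⟨h1, -⟩ ⟨h2, -⟩
      have h1' : X ω = x i := h1
      have h2' : X ω = x j := h2
      exact hij (hxinj (h1'.symm.trans h2'))
    rw [hset, measure_iUnion hdisj
      (fun i => (hX (measurableSet_singleton _)).inter (hV (hB i)))]
    have hterm : ∀ i, ℙ (X ⁻¹' {x i} ∩
        V ⁻¹' ((fun v : EuclideanSpace ℝ (Fin n) => x i + σ • v) ⁻¹' (f ⁻¹' {x i})))
        = ∫⁻ y, Set.indicator (f ⁻¹' {x i}) (aFun n σ x P i) y ∂volume := by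
      intro i
      rw [hindep.measure_inter_preimage_eq_mul _ _ (measurableSet_singleton _) (hB i)]
      have hPX : ℙ (X ⁻¹' {x i}) = ENNReal.ofReal (P i) := by
        have h2 : (ℙ (X ⁻¹' {x i})).toReal = P i := hXP i
        rw [← h2, ENNReal.ofReal_toReal (measure_ne_top _ _)]
      have hPV : ℙ (V ⁻¹' ((fun v : EuclideanSpace ℝ (Fin n) => x i + σ • v) ⁻¹'
          (f ⁻¹' {x i})))
          = ∫⁻ y in f ⁻¹' {x i}, ENNReal.ofReal (gaussDensity n (σ ^ 2) (y - x i)) ∂volume := by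
        rw [← Measure.map_apply hV (hB i), ← Measure.map_apply (hTm i) (hA i), hlaw i,
          withDensity_apply _ (hA i)]
      rw [hPX, hPV, ← lintegral_indicator (hA i)]
      have hgm : Measurable fun y : EuclideanSpace ℝ (Fin n) =>
          Set.indicator (f ⁻¹' {x i}) (fun y => ENNReal.ofReal (gaussDensity n (σ ^ 2) (y - x i))) y := by
        exact (gauss_cont _ _).indicator (hA i)
      rw [← lintegral_const_mul _ hgm]
      congr 1
      funext y
      by_cases hy : y ∈ f ⁻¹' {x i}
      · rw [Set.indicator_of_mem hy, Set.indicator_of_mem hy]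
        unfold aFun
        rw [mul_comm (gaussDensity n (σ ^ 2) (y - x i)) (P i),
          ENNReal.ofReal_mul (hP i).le]
      · rw [Set.indicator_of_notMem hy, Set.indicator_of_notMem hy, mul_zero]
    rw [tsum_congr hterm, ← lintegral_tsum
      (fun i => ((aFun_meas n σ x P i).indicator (hA i)).aemeasurable)]
    rfl
  -- Step 2: identify the limit L f
  have hLf : ∀ f : EuclideanSpace ℝ (Fin n) → EuclideanSpace ℝ (Fin n), Measurable f →
      L f = (ℙ {ω | f (Y ω) = X ω}ᶜ).toReal := by
    intro f hf
    have hd : Measurable fun ω => f (Y ω) - X ω := (hf.comp hYm).sub hX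
    have hsm := hEqMeas f hf
    have htend : Tendsto (fun γ : ℝ => ∫ ω, (1 - Real.exp (-‖f (Y ω) - X ω‖ ^ 2 / γ ^ 2)) ∂ℙ)
        (𝓝[>] (0:ℝ))
        (𝓝 (∫ ω, Set.indicator {ω | f (Y ω) = X ω}ᶜ (fun _ => (1:ℝ)) ω ∂ℙ)) := by
      apply tendsto_integral_filter_of_dominated_convergence (bound := fun _ => (1:ℝ))
      · filter_upwards [self_mem_nhdsWithin] with γ _
        apply Measurable.aestronglyMeasurable
        fun_prop
      · filter_upwards [self_mem_nhdsWithin] with γ (hγ : 0 < γ)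
        apply ae_of_all
        intro ω
        have hc : (0:ℝ) ≤ ‖f (Y ω) - X ω‖ ^ 2 := by positivity
        have he1 : Real.exp (-‖f (Y ω) - X ω‖ ^ 2 / γ ^ 2) ≤ 1 := by
          rw [Real.exp_le_one_iff]
          apply div_nonpos_of_nonpos_of_nonneg (by linarith) (by positivity)
        have he0 : 0 < Real.exp (-‖f (Y ω) - X ω‖ ^ 2 / γ ^ 2) := Real.exp_pos _
        rw [Real.norm_eq_abs, abs_le]
        constructor <;> linarith
      · exact integrable_const 1
      · apply ae_of_all
        intro ω
        have hc : (0:ℝ) ≤ ‖f (Y ω) - X ω‖ ^ 2 := by positivity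
        have ht := tendsto_m hc
        by_cases hω : f (Y ω) = X ω
        · have hc0 : ‖f (Y ω) - X ω‖ ^ 2 = 0 := by
            rw [hω]; simp
          rw [if_pos hc0] at ht
          have hmem : ω ∉ {ω | f (Y ω) = X ω}ᶜ := by
            simp [hω]
          rw [Set.indicator_of_notMem hmem]
          exact ht
        · have hc0 : ‖f (Y ω) - X ω‖ ^ 2 ≠ 0 := by
            intro h0
            apply hω
            have : f (Y ω) - X ω = 0 := by
              rwa [pow_eq_zero_iff (by norm_num), norm_eq_zero] at h0
            rwa [sub_eq_zero] at this
          rw [if_neg hc0] at ht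
          have hmem : ω ∈ {ω | f (Y ω) = X ω}ᶜ := hω
          rw [Set.indicator_of_mem hmem]
          exact ht
    have hint : ∫ ω, Set.indicator {ω | f (Y ω) = X ω}ᶜ (fun _ => (1:ℝ)) ω ∂ℙ
        = (ℙ {ω | f (Y ω) = X ω}ᶜ).toReal := by
      rw [MeasureTheory.integral_indicator_const (1:ℝ) hsm.compl, smul_eq_mul, mul_one, measureReal_def]
    rw [← hint]
    exact tendsto_nhds_unique (hL f hf) htend
  -- Step 3: optimality in integral form
  have hQle : ∀ f : EuclideanSpace ℝ (Fin n) → EuclideanSpace ℝ (Fin n), Measurable f →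
      ∫⁻ y, Qfun n σ x P f y ∂volume ≤ ∫⁻ y, Qfun n σ x P fstar y ∂volume := by
    intro f hf
    rw [← key f hf, ← key fstar hfstar]
    have h1 : L fstar ≤ L f := hmin f hf
    rw [hLf fstar hfstar, hLf f hf] at h1
    have h2 : ℙ {ω | fstar (Y ω) = X ω}ᶜ ≤ ℙ {ω | f (Y ω) = X ω}ᶜ :=
      (ENNReal.toReal_le_toReal (measure_ne_top _ _) (measure_ne_top _ _)).mp h1
    rw [prob_compl_eq_one_sub (hEqMeas fstar hfstar),
      prob_compl_eq_one_sub (hEqMeas f hf)] at h2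
    exact (ENNReal.sub_le_sub_iff_left prob_le_one ENNReal.one_ne_top).mp h2
  -- Step 4: finiteness and positivity of Mfun, attainment of the sup
  have hgaussle : ∀ u : EuclideanSpace ℝ (Fin n),
      gaussDensity n (σ ^ 2) u ≤ (2 * Real.pi * σ ^ 2) ^ (-(n:ℝ)/2) := by
    intro u
    unfold gaussDensity
    have h1 : Real.exp (-‖u‖ ^ 2 / (2 * σ ^ 2)) ≤ 1 := by
      rw [Real.exp_le_one_iff]
      apply div_nonpos_of_nonpos_of_nonneg (neg_nonpos.mpr (by positivity)) (by positivity)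
    have hC : (0:ℝ) ≤ (2 * Real.pi * σ ^ 2) ^ (-(n:ℝ)/2) := by positivity
    calc (2 * Real.pi * σ ^ 2) ^ (-(n:ℝ)/2) * Real.exp (-‖u‖ ^ 2 / (2 * σ ^ 2))
        ≤ (2 * Real.pi * σ ^ 2) ^ (-(n:ℝ)/2) * 1 := by
          exact mul_le_mul_of_nonneg_left h1 hC
      _ = (2 * Real.pi * σ ^ 2) ^ (-(n:ℝ)/2) := mul_one _
  have hale : ∀ (i : I) (y : EuclideanSpace ℝ (Fin n)),
      aFun n σ x P i y ≤ ENNReal.ofReal ((2 * Real.pi * σ ^ 2) ^ (-(n:ℝ)/2))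
        * ENNReal.ofReal (P i) := by
    intro i y
    unfold aFun
    have hC : (0:ℝ) ≤ (2 * Real.pi * σ ^ 2) ^ (-(n:ℝ)/2) := by positivity
    rw [← ENNReal.ofReal_mul hC]
    apply ENNReal.ofReal_le_ofReal
    exact mul_le_mul_of_nonneg_right (hgaussle (y - x i)) (hP i).le
  have hP1 : ∑' i, ENNReal.ofReal (P i) = 1 := by
    rw [← ENNReal.ofReal_tsum_of_nonneg (fun i => (hP i).le) hPsummable, hPsum,
      ENNReal.ofReal_one]
  have hsumfin : ∀ y, (∑' i, aFun n σ x P i y) ≠ ⊤ := by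
    intro y
    apply ne_top_of_le_ne_top (b := ENNReal.ofReal ((2 * Real.pi * σ ^ 2) ^ (-(n:ℝ)/2)) * 1)
    · exact ENNReal.mul_ne_top ENNReal.ofReal_ne_top ENNReal.one_ne_top
    · calc (∑' i, aFun n σ x P i y)
          ≤ ∑' i, ENNReal.ofReal ((2 * Real.pi * σ ^ 2) ^ (-(n:ℝ)/2)) * ENNReal.ofReal (P i) :=
            ENNReal.tsum_le_tsum (fun i => hale i y)
        _ = ENNReal.ofReal ((2 * Real.pi * σ ^ 2) ^ (-(n:ℝ)/2)) * ∑' i, ENNReal.ofReal (P i) :=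
            ENNReal.tsum_mul_left
        _ = ENNReal.ofReal ((2 * Real.pi * σ ^ 2) ^ (-(n:ℝ)/2)) * 1 := by rw [hP1]
  have hMpos : ∀ y, 0 < Mfun n σ x P y := by
    intro y
    obtain ⟨i0⟩ := hIne
    have h1 : 0 < aFun n σ x P i0 y :=
      ENNReal.ofReal_pos.mpr (mul_pos (gauss_pos hσ2 _) (hP i0))
    exact lt_of_lt_of_le h1 (le_iSup (fun i => aFun n σ x P i y) i0)
  have hMfin : ∀ y, Mfun n σ x P y ≠ ⊤ := by
    intro y
    apply ne_top_of_le_ne_top (hsumfin y)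
    exact iSup_le fun i => ENNReal.le_tsum i
  have hattain : ∀ y, ∃ j, aFun n σ x P j y = Mfun n σ x P y := by
    intro y
    have hM0 : Mfun n σ x P y ≠ 0 := (hMpos y).ne'
    have hhalf : Mfun n σ x P y / 2 ≠ 0 := by
      simp [ENNReal.div_eq_zero_iff, hM0]
    have hfin : {i | Mfun n σ x P y / 2 ≤ aFun n σ x P i y}.Finite :=
      ENNReal.finite_const_le_of_tsum_ne_top (hsumfin y) hhalf
    have hne : {i | Mfun n σ x P y / 2 ≤ aFun n σ x P i y}.Nonempty := by
      by_contra h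
      rw [Set.not_nonempty_iff_eq_empty] at h
      have hlt : ∀ i, aFun n σ x P i y < Mfun n σ x P y / 2 := by
        intro i
        by_contra hc
        have hmem : i ∈ {i | Mfun n σ x P y / 2 ≤ aFun n σ x P i y} := le_of_not_gt hc
        rw [h] at hmem
        exact hmem
      have hle2 : Mfun n σ x P y ≤ Mfun n σ x P y / 2 :=
        iSup_le fun i => (hlt i).le
      exact absurd hle2 (not_le.mpr (ENNReal.half_lt_self hM0 (hMfin y)))
    obtain ⟨j, hj, hjmax⟩ := Set.Finite.exists_maximalFor
      (fun i => aFun n σ x P i y) _ hfin hne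
    refine ⟨j, le_antisymm (le_iSup (fun i => aFun n σ x P i y) j) ?_⟩
    apply iSup_le
    intro i
    by_cases hi : Mfun n σ x P y / 2 ≤ aFun n σ x P i y
    · by_cases hle : aFun n σ x P i y ≤ aFun n σ x P j y
      · exact hle
      · exact hjmax hi (le_of_not_ge hle)
    · exact le_trans (le_of_not_ge hi) hj
  -- Step 5: measurable selector achieving Mfun
  obtain ⟨g, hgmeas, hQg⟩ : ∃ g : EuclideanSpace ℝ (Fin n) → EuclideanSpace ℝ (Fin n),
      Measurable g ∧ ∀ y, Qfun n σ x P g y = Mfun n σ x P y := by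
    letI : Encodable I := Encodable.ofCountable I
    letI : MeasurableSpace I := ⊤
    have hΦex : ∀ y : EuclideanSpace ℝ (Fin n), ∃ i,
        aFun n σ x P i y = Mfun n σ x P y ∧
        ∀ j, aFun n σ x P j y = Mfun n σ x P y →
          Encodable.encode i ≤ Encodable.encode j := by
      intro y
      obtain ⟨j0, hj0⟩ := hattain y
      have hKne : {m : ℕ | ∃ i, Encodable.encode i = m ∧
          aFun n σ x P i y = Mfun n σ x P y}.Nonempty :=
        ⟨Encodable.encode j0, j0, rfl, hj0⟩
      obtain ⟨i, hi_enc, hi_eq⟩ := Nat.sInf_mem hKne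
      refine ⟨i, hi_eq, fun j hj => ?_⟩
      rw [hi_enc]
      exact Nat.sInf_le ⟨j, rfl, hj⟩
    have hΦuniq : ∀ (y : EuclideanSpace ℝ (Fin n)) i i',
        (aFun n σ x P i y = Mfun n σ x P y ∧
          ∀ j, aFun n σ x P j y = Mfun n σ x P y →
            Encodable.encode i ≤ Encodable.encode j) →
        (aFun n σ x P i' y = Mfun n σ x P y ∧
          ∀ j, aFun n σ x P j y = Mfun n σ x P y →
            Encodable.encode i' ≤ Encodable.encode j) → i = i' := by
      rintro y i i' ⟨h1, h2⟩ ⟨h1', h2'⟩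
      exact Encodable.encode_injective (le_antisymm (h2 i' h1') (h2' i h1))
    choose h hh using hΦex
    have hsetm : ∀ i : I, MeasurableSet {y : EuclideanSpace ℝ (Fin n) |
        aFun n σ x P i y = Mfun n σ x P y} := by
      intro i
      exact (aFun_meas n σ x P i).stronglyMeasurable.measurableSet_eq_fun (Mfun_meas n σ x P).stronglyMeasurable
    refine ⟨fun y => x (h y), ?_, ?_⟩
    · apply Measurable.comp (measurable_from_top (f := x))
      apply measurable_to_countable
      intro y
      have hfiber : h ⁻¹' {h y} = {y' | aFun n σ x P (h y) y' = Mfun n σ x P y'} ∩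
          ⋂ j, {y' | aFun n σ x P j y' = Mfun n σ x P y' →
            Encodable.encode (h y) ≤ Encodable.encode j} := by
        ext y'
        simp only [Set.mem_preimage, Set.mem_singleton_iff, Set.mem_inter_iff,
          Set.mem_iInter, Set.mem_setOf_eq]
        constructor
        · intro he
          have := hh y'
          rw [he] at this
          exact ⟨this.1, this.2⟩
        · intro hc
          exact hΦuniq y' (h y') (h y) (hh y') ⟨hc.1, hc.2⟩
      rw [hfiber]
      apply (hsetm (h y)).inter
      apply MeasurableSet.iInter
      intro j
      by_cases hle : Encodable.encode (h y) ≤ Encodable.encode j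
      · have huniv : {y' : EuclideanSpace ℝ (Fin n) |
            aFun n σ x P j y' = Mfun n σ x P y' →
              Encodable.encode (h y) ≤ Encodable.encode j} = Set.univ := by
          ext y'; simp [hle]
        rw [huniv]
        exact MeasurableSet.univ
      · have hcompl : {y' : EuclideanSpace ℝ (Fin n) |
            aFun n σ x P j y' = Mfun n σ x P y' →
              Encodable.encode (h y) ≤ Encodable.encode j}
            = {y' | aFun n σ x P j y' = Mfun n σ x P y'}ᶜ := by
          ext y'; simp [hle]
        rw [hcompl]
        exact (hsetm j).compl
    · intro y
      unfold Qfun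
      rw [tsum_eq_single (h y) ?_]
      · rw [Set.indicator_of_mem (show y ∈ (fun y => x (h y)) ⁻¹' {x (h y)} from rfl)]
        exact (hh y).1
      · intro i hi
        apply Set.indicator_of_notMem
        intro hmem
        have : x (h y) = x i := hmem
        exact hi (hxinj this).symm
  -- Step 6: a.e. equality
  have hae : Qfun n σ x P fstar =ᵐ[volume] Mfun n σ x P := by
    have hQfm : Measurable (Qfun n σ x P fstar) := Qfun_meas n σ x P hfstar
    have hMm : Measurable (Mfun n σ x P) := Mfun_meas n σ x P
    have hptle : ∀ y, Qfun n σ x P fstar y ≤ Mfun n σ x P y :=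
      Qfun_le_Mfun n σ hxinj P fstar
    have hle1 : ∫⁻ y, Mfun n σ x P y ∂volume ≤ ∫⁻ y, Qfun n σ x P fstar y ∂volume := by
      have : ∫⁻ y, Mfun n σ x P y ∂volume = ∫⁻ y, Qfun n σ x P g y ∂volume :=
        lintegral_congr fun y => (hQg y).symm
      rw [this]
      exact hQle g hgmeas
    have hle2 : ∫⁻ y, Qfun n σ x P fstar y ∂volume ≤ ∫⁻ y, Mfun n σ x P y ∂volume :=
      lintegral_mono hptle
    have heq : ∫⁻ y, Mfun n σ x P y ∂volume = ∫⁻ y, Qfun n σ x P fstar y ∂volume :=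
      le_antisymm hle1 hle2
    have hfin : ∫⁻ y, Qfun n σ x P fstar y ∂volume ≠ ⊤ := by
      rw [← key fstar hfstar]
      exact measure_ne_top _ _
    have hsub : ∫⁻ y, (Mfun n σ x P y - Qfun n σ x P fstar y) ∂volume = 0 := by
      rw [lintegral_sub hQfm hfin (ae_of_all _ hptle), heq, tsub_self]
    have hz := (lintegral_eq_zero_iff (hMm.sub hQfm)).mp hsub
    filter_upwards [hz] with y hy
    have hy' : Mfun n σ x P y - Qfun n σ x P fstar y = 0 := hy
    exact le_antisymm (hptle y) (tsub_eq_zero_iff_le.mp hy')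
  -- Step 7: conclusion
  filter_upwards [hae] with y hy
  have hMy0 : Qfun n σ x P fstar y ≠ 0 := by
    rw [hy]
    exact (hMpos y).ne'
  have hjex : ∃ j, fstar y = x j := by
    by_contra hc
    push_neg at hc
    apply hMy0
    unfold Qfun
    convert tsum_zero with i
    apply Set.indicator_of_notMem
    intro hm
    exact hc i hm
  obtain ⟨j, hjy⟩ := hjex
  refine ⟨⟨j, hjy⟩, ?_⟩
  have hQy : Qfun n σ x P fstar y = aFun n σ x P j y := by
    unfold Qfun
    rw [tsum_eq_single j ?_]
    · exact Set.indicator_of_mem (show y ∈ fstar ⁻¹' {x j} from hjy) _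
    · intro i hi
      apply Set.indicator_of_notMem
      intro hm
      have : fstar y = x i := hm
      exact hi (hxinj (this.symm.trans hjy))
  have haj : aFun n σ x P j y = Mfun n σ x P y := by
    rw [← hQy]
    exact hy
  have hub : ∀ i, gaussDensity n (σ ^ 2) (y - x i) * P i
      ≤ gaussDensity n (σ ^ 2) (y - x j) * P j := by
    intro i
    have h1 : aFun n σ x P i y ≤ aFun n σ x P j y := by
      rw [haj]
      exact le_iSup (fun i => aFun n σ x P i y) i
    unfold aFun at h1
    exact (ENNReal.ofReal_le_ofReal_iff (mul_pos (gauss_pos hσ2 _) (hP j)).le).mp h1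
  rw [hjy, hXP j]
  have hbdd : BddAbove (Set.range fun i => gaussDensity n (σ ^ 2) (y - x i) * P i) := by
    refine ⟨gaussDensity n (σ ^ 2) (y - x j) * P j, ?_⟩
    rintro r ⟨i, rfl⟩
    exact hub i
  exact le_antisymm (le_ciSup hbdd j) (ciSup_le hub)
end

section
/- Let ψ : ℝⁿ → ℝ be convex, continuously differentiable, L-Lipschitz, and with L′-Lipschitz gradient ∇ψ, and let 0 < α < 1. Define f(y) = ∇ψ(y) + α y (a bijection of ℝⁿ) and h(y) = (1−α)⟨y, ∇ψ(y)⟩ + (α(1−α)/2)‖y‖² − (1/2)‖∇ψ(y)‖² − ψ(y). Then the function R : ℝⁿ → ℝ defined by R(x) = h(f⁻¹(x)) is coercive: R(x) → +∞ as ‖x‖ → ∞. Moreover there exist constants c > 0 and M > 0 (depending only on α, L, L′, ψ(0), and f⁻¹(0)) such that R(x) ≥ c‖x‖² whenever ‖x‖ ≥ M. -/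
open Filter Topology
open scoped RealInnerProductSpace

private lemma aux_quad (β L₀ K T t : ℝ) (hβ : 0 < β) (hL : 0 ≤ L₀) (hK : 0 ≤ K)
    (h1 : 2 * (2 * L₀ + K) ≤ β * T) (htT : T ≤ t) (ht1 : 1 ≤ t) :
    2 * L₀ * t + K ≤ β / 2 * t ^ 2 := by
  nlinarith [mul_nonneg (mul_nonneg hβ.le (sub_nonneg.2 htT)) (by linarith : (0:ℝ) ≤ t),
    mul_nonneg (by linarith : (0:ℝ) ≤ β * T - 2 * (2 * L₀ + K)) (by linarith : (0:ℝ) ≤ t),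
    mul_nonneg hK (by linarith : (0:ℝ) ≤ t - 1)]

set_option maxHeartbeats 1000000 in
/-- **Coercivity of the regularizer of an LPN.** Let `ψ : ℝⁿ → ℝ` be
convex, continuously differentiable, `L`-Lipschitz, with `L′`-Lipschitz gradient, and
`0 < α < 1`. Let `f(y) = ∇ψ(y) + αy` (a bijection of `ℝⁿ`, with inverse `g`) and
`h(y) = (1−α)⟨y, ∇ψ(y)⟩ + (α(1−α)/2)‖y‖² − (1/2)‖∇ψ(y)‖² − ψ(y)`. Then
`R(x) = h(f⁻¹(x))` is coercive, and there are `c > 0`, `M > 0` with `R(x) ≥ c‖x‖²`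
whenever `‖x‖ ≥ M`. -/
theorem statement14 {n : ℕ} (ψ : EuclideanSpace ℝ (Fin n) → ℝ)
    (hconv : ConvexOn ℝ Set.univ ψ) (hC1 : ContDiff ℝ 1 ψ)
    (L L' : ℝ)
    (hLip : ∀ y y', |ψ y - ψ y'| ≤ L * ‖y - y'‖)
    (hLipGrad : ∀ y y', ‖gradient ψ y - gradient ψ y'‖ ≤ L' * ‖y - y'‖)
    (α : ℝ) (hα0 : 0 < α) (hα1 : α < 1)
    (f : EuclideanSpace ℝ (Fin n) → EuclideanSpace ℝ (Fin n))
    (hf : ∀ y, f y = gradient ψ y + α • y)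
    (g : EuclideanSpace ℝ (Fin n) → EuclideanSpace ℝ (Fin n))
    (hgf : Function.LeftInverse g f) (hfg : Function.RightInverse g f)
    (R : EuclideanSpace ℝ (Fin n) → ℝ)
    (hR : ∀ x, R x = (1 - α) * ⟪g x, gradient ψ (g x)⟫
      + α * (1 - α) / 2 * ‖g x‖ ^ 2 - 1 / 2 * ‖gradient ψ (g x)‖ ^ 2 - ψ (g x)) :
    (∀ C : ℝ, ∃ D : ℝ, ∀ x, D ≤ ‖x‖ → C ≤ R x) ∧
    ∃ c > (0 : ℝ), ∃ M > (0 : ℝ), ∀ x, M ≤ ‖x‖ → c * ‖x‖ ^ 2 ≤ R x := by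
  set L₀ : ℝ := |L| with hL₀def
  have hL₀0 : (0 : ℝ) ≤ L₀ := abs_nonneg L
  have hLip' : ∀ y y', |ψ y - ψ y'| ≤ L₀ * ‖y - y'‖ := fun y y' =>
    (hLip y y').trans (mul_le_mul_of_nonneg_right (le_abs_self L) (norm_nonneg _))
  -- gradient bound
  have hlipW : LipschitzWith (Real.toNNReal L₀) ψ := by
    apply LipschitzWith.of_dist_le_mul
    intro y y'
    rw [Real.dist_eq, dist_eq_norm]
    simpa [Real.coe_toNNReal _ hL₀0] using hLip' y y'
  have hgradle : ∀ y, ‖gradient ψ y‖ ≤ L₀ := by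
    intro y
    have h1 : ‖fderiv ℝ ψ y‖ ≤ (Real.toNNReal L₀ : ℝ) :=
      norm_fderiv_le_of_lipschitz ℝ hlipW
    have h2 : ‖gradient ψ y‖ = ‖fderiv ℝ ψ y‖ := by
      rw [gradient]; exact LinearIsometryEquiv.norm_map _ _
    rw [h2]
    simpa [Real.coe_toNNReal _ hL₀0] using h1
  -- lower bound on ψ
  have hψub : ∀ y, ψ y ≤ |ψ 0| + L₀ * ‖y‖ := by
    intro y
    have h := hLip' y 0
    rw [sub_zero] at h
    have h1 : ψ y - ψ 0 ≤ L₀ * ‖y‖ := (le_abs_self _).trans h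
    linarith [le_abs_self (ψ 0)]
  set K : ℝ := L₀ ^ 2 / 2 + |ψ 0| with hKdef
  have hK0 : 0 ≤ K := by positivity
  set β : ℝ := α * (1 - α) / 2 with hβdef
  have hβ0 : 0 < β := by rw [hβdef]; nlinarith
  -- main pointwise lower bound
  have hmain : ∀ x, β * ‖g x‖ ^ 2 - 2 * L₀ * ‖g x‖ - K ≤ R x := by
    intro x
    have hin : |⟪g x, gradient ψ (g x)⟫| ≤ ‖g x‖ * ‖gradient ψ (g x)‖ :=
      abs_real_inner_le_norm _ _
    have hg := hgradle (g x)
    have hψ := hψub (g x)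
    have hyn : (0:ℝ) ≤ ‖g x‖ := norm_nonneg _
    have hgn : (0:ℝ) ≤ ‖gradient ψ (g x)‖ := norm_nonneg _
    rw [hR x, hKdef]
    have hinlb : -(‖g x‖ * L₀) ≤ ⟪g x, gradient ψ (g x)⟫ := by
      nlinarith [neg_abs_le (⟪g x, gradient ψ (g x)⟫)]
    have hsq : ‖gradient ψ (g x)‖ ^ 2 ≤ L₀ ^ 2 := by nlinarith
    nlinarith [mul_le_mul_of_nonneg_left hinlb (by linarith : (0:ℝ) ≤ 1 - α),
      mul_nonneg hyn hL₀0, mul_nonneg (mul_nonneg hα0.le hyn) hL₀0]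
  -- norm comparison : ‖x‖ ≤ L₀ + α * ‖g x‖
  have hnorm : ∀ x, ‖x‖ ≤ L₀ + α * ‖g x‖ := by
    intro x
    have hx : x = gradient ψ (g x) + α • (g x) := by
      conv_lhs => rw [← hfg x, hf]
    calc ‖x‖ = ‖gradient ψ (g x) + α • (g x)‖ := by rw [← hx]
      _ ≤ ‖gradient ψ (g x)‖ + ‖α • (g x)‖ := norm_add_le _ _
      _ ≤ L₀ + α * ‖g x‖ := by
          rw [norm_smul, Real.norm_eq_abs, abs_of_pos hα0]
          exact add_le_add (hgradle _) le_rfl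
  set T : ℝ := max 1 (2 * (2 * L₀ + K) / β) with hTdef
  have hT1 : (1:ℝ) ≤ T := le_max_left _ _
  have hT2 : 2 * (2 * L₀ + K) / β ≤ T := le_max_right _ _
  set M : ℝ := max (2 * L₀) (L₀ + α * T) + 1 with hMdef
  have hM0 : 0 < M := by
    have : 0 ≤ max (2 * L₀) (L₀ + α * T) :=
      le_trans (by nlinarith : (0:ℝ) ≤ L₀ + α * T) (le_max_right _ _)
    linarith
  set c : ℝ := β / (8 * α ^ 2) with hcdef
  have hc0 : 0 < c := by positivity
  have key : ∀ x, M ≤ ‖x‖ → c * ‖x‖ ^ 2 ≤ R x := by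
    intro x hx
    have htn : (0:ℝ) ≤ ‖g x‖ := norm_nonneg _
    have hsn : (0:ℝ) ≤ ‖x‖ := norm_nonneg _
    have hs1 : 2 * L₀ ≤ ‖x‖ := le_trans (le_trans (le_max_left _ _) (by linarith)) hx
    have hs2 : L₀ + α * T ≤ ‖x‖ := le_trans (le_trans (le_max_right _ _) (by linarith)) hx
    have hst : ‖x‖ ≤ L₀ + α * ‖g x‖ := hnorm x
    have htT : T ≤ ‖g x‖ := by
      have h : α * T ≤ α * ‖g x‖ := by linarith
      exact le_of_mul_le_mul_left h hα0
    have ht1 : (1:ℝ) ≤ ‖g x‖ := le_trans hT1 htT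
    have hquad : 2 * L₀ * ‖g x‖ + K ≤ β / 2 * ‖g x‖ ^ 2 := by
      have h1 : 2 * (2 * L₀ + K) ≤ β * T := by
        rw [div_le_iff₀ hβ0] at hT2; linarith
      exact aux_quad β L₀ K T ‖g x‖ hβ0 hL₀0 hK0 h1 htT ht1
    have hts : ‖x‖ / (2 * α) ≤ ‖g x‖ := by
      rw [div_le_iff₀ (by linarith : (0:ℝ) < 2 * α)]
      nlinarith
    have hs2t : ‖x‖ ≤ 2 * α * ‖g x‖ := by
      rw [div_le_iff₀ (by linarith : (0:ℝ) < 2 * α)] at hts; linarith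
    have h4 : ‖x‖ ^ 2 ≤ 4 * α ^ 2 * ‖g x‖ ^ 2 := by nlinarith
    have hid : c * (4 * α ^ 2 * ‖g x‖ ^ 2) = β / 2 * ‖g x‖ ^ 2 := by
      rw [hcdef, div_mul_eq_mul_div, div_eq_iff (by positivity : (8:ℝ) * α ^ 2 ≠ 0)]
      ring
    calc c * ‖x‖ ^ 2 ≤ c * (4 * α ^ 2 * ‖g x‖ ^ 2) :=
          mul_le_mul_of_nonneg_left h4 hc0.le
      _ = β / 2 * ‖g x‖ ^ 2 := hid
      _ ≤ β * ‖g x‖ ^ 2 - 2 * L₀ * ‖g x‖ - K := by nlinarith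
      _ ≤ R x := hmain x
  refine ⟨?_, c, hc0, M, hM0, key⟩
  intro C
  refine ⟨max M (Real.sqrt (max C 0 / c)), fun x hx => ?_⟩
  have hxM : M ≤ ‖x‖ := le_trans (le_max_left _ _) hx
  have hxs : Real.sqrt (max C 0 / c) ≤ ‖x‖ := le_trans (le_max_right _ _) hx
  have h1 : max C 0 / c ≤ ‖x‖ ^ 2 := by
    have h2 : Real.sqrt (max C 0 / c) ^ 2 = max C 0 / c :=
      Real.sq_sqrt (by positivity)
    calc max C 0 / c = Real.sqrt (max C 0 / c) ^ 2 := h2.symm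
      _ ≤ ‖x‖ ^ 2 := by
          exact pow_le_pow_left₀ (Real.sqrt_nonneg _) hxs 2
  have h3 : max C 0 ≤ c * ‖x‖ ^ 2 := by
    rw [div_le_iff₀ hc0] at h1; linarith [h1]
  exact le_trans (le_max_left C 0) (h3.trans (key x hxM))
end
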